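/- Let A : ℝ^p → ℝ^(m×d) and b : ℝ^p → ℝ^m be affine maps and P(ω) = {x ∈ ℝ^d : A(ω)x ≤ b(ω)}. For any subset Λ ⊆ ℝ^p, the common intersection ⋂_{ω ∈ Λ} P(ω) equals ⋂_{ω ∈ conv(Λ)} P(ω), where conv(Λ) denotes the convex hull of Λ. -/
import Mathlib

/-- The common intersection of an affine family of polyhedra over a
parameter set `Λ` equals the common intersection over the convex hull of `Λ`. -/
theorem inter_eq_inter_convexHull (p m d : ℕ)
    (A : (Fin p → ℝ) →ᵃ[ℝ] Matrix (Fin m) (Fin d) ℝ)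
    (b : (Fin p → ℝ) →ᵃ[ℝ] (Fin m → ℝ))
    (P : (Fin p → ℝ) → Set (Fin d → ℝ))
    (hP : ∀ ω, P ω = {x | (A ω).mulVec x ≤ b ω})
    (Λ : Set (Fin p → ℝ)) :
    ⋂ ω ∈ Λ, P ω = ⋂ ω ∈ convexHull ℝ Λ, P ω := by
  ext x
  simp only [Set.mem_iInter, hP, Set.mem_setOf_eq]
  constructor
  · intro h ω hω
    have hconv : Convex ℝ {ω : Fin p → ℝ | (A ω).mulVec x ≤ b ω} := by
      intro ω₁ h1 ω₂ h2 a c ha hc hac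
      simp only [Set.mem_setOf_eq] at h1 h2 ⊢
      rw [Convex.combo_affine_apply hac, Convex.combo_affine_apply hac,
        Matrix.add_mulVec, Matrix.smul_mulVec, Matrix.smul_mulVec]
      intro i
      simp only [Pi.add_apply, Pi.smul_apply, smul_eq_mul]
      exact add_le_add (mul_le_mul_of_nonneg_left (h1 i) ha)
        (mul_le_mul_of_nonneg_left (h2 i) hc)
    exact convexHull_min h hconv hω
  · intro h ω hω
    exact h ω (subset_convexHull ℝ Λ hω)
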